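/- Let S ⊂ ℤ_{≥0}^r be a good semigroup with weight function w, and suppose ℓ is an M-vertex of the cube (ℓ, J⁺, J⁻) (i.e., w(ℓ+eᵢ) < w(ℓ) for all i ∈ J⁺ and w(ℓ−eᵢ) < w(ℓ) for all i ∈ J⁻, where J⁺ ∩ J⁻ = ∅ and ℓ ≥ e_{J⁻}). Then w(ℓ') ≤ w(ℓ) for every vertex ℓ' of the cube, i.e., every vertex ℓ + e_{K⁺} − e_{K⁻} with K⁺ ⊆ J⁺, K⁻ ⊆ J⁻. -/

import Mathlib

open Finset

/-- Lattice points (we work in `ℤ^r`; nonnegativity is imposed via hypotheses). -/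
abbrev Pt (r : ℕ) := Fin r → ℤ

/-- The `i`-th standard basis vector. -/
def E {r : ℕ} (i : Fin r) : Pt r := Pi.single i 1

/-- `e_K = ∑_{i ∈ K} e_i`. -/
def eK {r : ℕ} (K : Finset (Fin r)) : Pt r := ∑ i ∈ K, E i


lemma eK_apply {r : ℕ} (K : Finset (Fin r)) (i : Fin r) :
    eK K i = if i ∈ K then 1 else 0 := by
  simp [eK, E, Finset.sum_apply, Pi.single_apply]

lemma E_apply {r : ℕ} (i j : Fin r) : E i j = if j = i then 1 else 0 := by
  simp [E, Pi.single_apply]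

lemma eK_insert {r : ℕ} {K : Finset (Fin r)} {j : Fin r} (hj : j ∉ K) :
    eK (insert j K) = eK K + E j := by
  funext k; simp [eK, Finset.sum_insert hj, add_comm]

/-- `Δ̄ᵢ(ℓ) = {s ∈ S : sᵢ = ℓᵢ, sⱼ ≥ ℓⱼ ∀ j ≠ i}`. -/
def DeltaBarI {r : ℕ} (S : Set (Pt r)) (ℓ : Pt r) (i : Fin r) : Set (Pt r) :=
  {s | s ∈ S ∧ s i = ℓ i ∧ ∀ j, j ≠ i → ℓ j ≤ s j}

/-- `Δᵢ(ℓ) = {s ∈ S : sᵢ = ℓᵢ, sⱼ > ℓⱼ ∀ j ≠ i}`. -/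
def DeltaI {r : ℕ} (S : Set (Pt r)) (ℓ : Pt r) (i : Fin r) : Set (Pt r) :=
  {s | s ∈ S ∧ s i = ℓ i ∧ ∀ j, j ≠ i → ℓ j < s j}

/-- `Δ(ℓ) = ∪ᵢ Δᵢ(ℓ)`. -/
def Delta {r : ℕ} (S : Set (Pt r)) (ℓ : Pt r) : Set (Pt r) := ⋃ i, DeltaI S ℓ i

/-- A good (local) semigroup `S ⊂ ℤ_{≥0}^r` with conductor `c`. -/
structure GoodSemigroup (r : ℕ) where
  S : Set (Pt r)
  c : Pt r
  nonneg : ∀ s ∈ S, (0 : Pt r) ≤ s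
  zero_mem : (0 : Pt r) ∈ S
  add_mem : ∀ s ∈ S, ∀ t ∈ S, s + t ∈ S
  coord_zero : ∀ s ∈ S, ∀ i, s i = 0 → s = 0
  min_mem : ∀ s ∈ S, ∀ t ∈ S, s ⊓ t ∈ S
  prop3 : ∀ s ∈ S, ∀ t ∈ S, ∀ i, s i = t i →
    ∃ u ∈ S, s ⊓ t ≤ u ∧ s i < u i ∧ ∀ j, j ≠ i → s j ≠ t j → u j = (s ⊓ t) j
  conductor_nonneg : (0 : Pt r) ≤ c
  conductor_mem : ∀ ℓ : Pt r, c ≤ ℓ → ℓ ∈ S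
  conductor_min : ∀ c' : Pt r, 0 ≤ c' → (∀ ℓ, c' ≤ ℓ → ℓ ∈ S) → c ≤ c'

/-- `h` is the (combinatorial) Hilbert function of the good semigroup `G`. -/
def IsHilbert {r : ℕ} (G : GoodSemigroup r) (h : Pt r → ℤ) : Prop :=
  h 0 = 0 ∧ ∀ ℓ : Pt r, 0 ≤ ℓ → ∀ i : Fin r,
    (h (ℓ + E i) = h ℓ + 1 ↔ (DeltaBarI G.S ℓ i).Nonempty) ∧
    (h (ℓ + E i) = h ℓ ↔ ¬ (DeltaBarI G.S ℓ i).Nonempty)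

/-- `w` is the weight function of the good semigroup `G` (i.e. `w(ℓ) = 2h(ℓ) − |ℓ|`),
characterized by `w(0) = 0` and the step property. -/
def IsWeight {r : ℕ} (G : GoodSemigroup r) (w : Pt r → ℤ) : Prop :=
  w 0 = 0 ∧ ∀ ℓ : Pt r, 0 ≤ ℓ → ∀ i : Fin r,
    (w (ℓ + E i) = w ℓ + 1 ↔ (DeltaBarI G.S ℓ i).Nonempty) ∧
    (w (ℓ + E i) = w ℓ - 1 ↔ ¬ (DeltaBarI G.S ℓ i).Nonempty)


lemma deltaBar_mono {r : ℕ} (S : Set (Pt r)) {a b : Pt r} (i : Fin r)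
    (h : ∀ j, j ≠ i → a j ≤ b j) (hi : b i = a i) :
    DeltaBarI S b i ⊆ DeltaBarI S a i := by
  rintro s ⟨hs, h1, h2⟩
  exact ⟨hs, by rw [h1, hi], fun j hj => (h j hj).trans (h2 j hj)⟩


lemma weight_step {r : ℕ} (G : GoodSemigroup r) (w : Pt r → ℤ) (hw : IsWeight G w)
    (a : Pt r) (ha : 0 ≤ a) (i : Fin r) :
    w (a + E i) = w a + 1 ∨ w (a + E i) = w a - 1 := by
  obtain ⟨h1, h2⟩ := hw.2 a ha i
  by_cases h : (DeltaBarI G.S a i).Nonempty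
  · exact Or.inl (h1.mpr h)
  · exact Or.inr (h2.mpr h)

lemma add_eK_nonneg {r : ℕ} {a : Pt r} (ha : 0 ≤ a) (K : Finset (Fin r)) :
    0 ≤ a + eK K := by
  intro k
  have := ha k
  simp only [Pi.zero_apply] at this
  simp only [Pi.add_apply, Pi.zero_apply, eK_apply]
  split <;> omega

lemma lip_up {r : ℕ} (G : GoodSemigroup r) (w : Pt r → ℤ) (hw : IsWeight G w) :
    ∀ K : Finset (Fin r), ∀ a : Pt r, 0 ≤ a → w (a + eK K) ≤ w a + K.card := by
  intro K
  induction K using Finset.induction_on with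
  | empty => intro a _; simp [eK]
  | insert _ _ hj ih =>
    rename_i j K
    intro a ha
    rw [eK_insert hj, ← add_assoc]
    have h0 := add_eK_nonneg ha K
    have := ih a ha
    rcases weight_step G w hw (a + eK K) h0 j with h | h <;>
      rw [h] <;> rw [Finset.card_insert_of_notMem hj] <;> push_cast <;> omega

lemma lip_down {r : ℕ} (G : GoodSemigroup r) (w : Pt r → ℤ) (hw : IsWeight G w) :
    ∀ K : Finset (Fin r), ∀ a : Pt r, 0 ≤ a → w a ≤ w (a + eK K) + K.card := by
  intro K
  induction K using Finset.induction_on with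
  | empty => intro a _; simp [eK]
  | insert _ _ hj ih =>
    rename_i j K
    intro a ha
    rw [eK_insert hj, ← add_assoc]
    have h0 := add_eK_nonneg ha K
    have := ih a ha
    rcases weight_step G w hw (a + eK K) h0 j with h | h <;>
      rw [h] <;> rw [Finset.card_insert_of_notMem hj] <;> push_cast <;> omega

/-- Generalized local minimum point of the weight function. -/
def GLM {r : ℕ} (w : Pt r → ℤ) (p : Pt r) : Prop :=
  0 ≤ p ∧ ∀ i : Fin r, 1 ≤ p i → w p < w (p - E i)

/-- Local minimum point of the weight function. -/
def LocMin {r : ℕ} (w : Pt r → ℤ) (p : Pt r) : Prop :=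
  GLM w p ∧ ∀ i : Fin r, w p < w (p + E i)

/-- if `ℓ` is an M-vertex of the cube `(ℓ, J⁺, J⁻)`, then the weight
of every vertex of the cube is at most `w(ℓ)`. -/
theorem stmt17 {r : ℕ} (G : GoodSemigroup r) (w : Pt r → ℤ) (hw : IsWeight G w)
    (ℓ : Pt r) (hl : 0 ≤ ℓ) (Jp Jm : Finset (Fin r)) (hdisj : Disjoint Jp Jm)
    (hJm : eK Jm ≤ ℓ)
    (hMp : ∀ i ∈ Jp, w (ℓ + E i) < w ℓ)
    (hMm : ∀ i ∈ Jm, w (ℓ - E i) < w ℓ) :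
    ∀ Kp ⊆ Jp, ∀ Km ⊆ Jm, w (ℓ + eK Kp - eK Km) ≤ w ℓ := by
  -- exact descent in the positive directions
  have exact_up : ∀ Kp, Kp ⊆ Jp → w (ℓ + eK Kp) = w ℓ - Kp.card := by
    intro Kp
    induction Kp using Finset.induction_on with
    | empty => intro _; simp [eK]
    | insert _ _ hj ih =>
      rename_i j Kp
      intro hsub
      have hjJ : j ∈ Jp := hsub (Finset.mem_insert_self j Kp)
      have hKJ : Kp ⊆ Jp := fun x hx => hsub (Finset.mem_insert_of_mem hx)
      have hempty : ¬ (DeltaBarI G.S ℓ j).Nonempty := by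
        have hstep := weight_step G w hw ℓ hl j
        have := hMp j hjJ
        have hlt : w (ℓ + E j) = w ℓ - 1 := by omega
        exact (hw.2 ℓ hl j).2.mp hlt
      have hempty2 : ¬ (DeltaBarI G.S (ℓ + eK Kp) j).Nonempty := by
        intro ⟨s, hs⟩
        refine hempty ⟨s, deltaBar_mono G.S j ?_ ?_ hs⟩
        · intro k _
          simp only [Pi.add_apply, eK_apply]
          split <;> omega
        · have : j ∉ Kp := fun h => hj h
          simp [eK_apply, this]
      have h0 := add_eK_nonneg hl Kp
      have hstep2 := (hw.2 (ℓ + eK Kp) h0 j).2.mpr hempty2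
      rw [eK_insert hj, ← add_assoc, hstep2, ih hKJ,
        Finset.card_insert_of_notMem hj]
      push_cast; ring
  -- exact descent in the negative directions
  have exact_down : ∀ Km, Km ⊆ Jm → w (ℓ - eK Km) = w ℓ - Km.card := by
    intro Km
    induction Km using Finset.induction_on with
    | empty => intro _; simp [eK]
    | insert _ _ hj ih =>
      rename_i j Km
      intro hsub
      have hjJ : j ∈ Jm := hsub (Finset.mem_insert_self j Km)
      have hKJ : Km ⊆ Jm := fun x hx => hsub (Finset.mem_insert_of_mem hx)
      have hjK : j ∉ Km := hj
      have ha0 : (0 : Pt r) ≤ ℓ - E j := by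
        intro k
        have h1 := hJm k
        have h2 := hl k
        simp only [Pi.sub_apply, Pi.zero_apply, E_apply]
        simp only [eK_apply] at h1
        by_cases hk : k = j
        · subst hk; simp [hjJ] at h1 ⊢; omega
        · simp [hk]; omega
      have hne : (DeltaBarI G.S (ℓ - E j) j).Nonempty := by
        have hstep := weight_step G w hw (ℓ - E j) ha0 j
        have heq : ℓ - E j + E j = ℓ := by ring
        rw [heq] at hstep
        have := hMm j hjJ
        have : w ℓ = w (ℓ - E j) + 1 := by omega
        exact (hw.2 (ℓ - E j) ha0 j).1.mp (by rw [heq]; omega)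
      set b : Pt r := ℓ - eK Km - E j with hb
      have hne2 : (DeltaBarI G.S b j).Nonempty := by
        obtain ⟨s, hs⟩ := hne
        refine ⟨s, deltaBar_mono G.S j ?_ ?_ hs⟩
        · intro k _
          simp only [hb, Pi.sub_apply, eK_apply, E_apply]
          split <;> omega
        · simp [hb, eK_apply, E_apply, hjK]
      have hb0 : (0 : Pt r) ≤ b := by
        intro k
        have h1 := hJm k
        simp only [eK_apply] at h1
        simp only [hb, Pi.sub_apply, Pi.zero_apply, eK_apply, E_apply]
        by_cases hk : k = j
        · subst hk; simp [hjJ, hjK] at h1 ⊢; omega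
        · by_cases hk2 : k ∈ Km
          · have : k ∈ Jm := hKJ hk2
            simp [hk, hk2, this] at h1 ⊢; omega
          · have h2 := hl k
            simp [hk, hk2]; omega
      have hstep2 := (hw.2 b hb0 j).1.mpr hne2
      have heq2 : b + E j = ℓ - eK Km := by rw [hb]; ring
      have heq3 : ℓ - eK (insert j Km) = b := by
        rw [hb, eK_insert hj]; ring
      rw [heq2] at hstep2
      rw [heq3, Finset.card_insert_of_notMem hj]
      have := ih hKJ
      push_cast
      omega
  intro Kp hKp Km hKm
  have hKmJ : ∀ k, eK Km k ≤ eK Jm k := by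
    intro k
    simp only [eK_apply]
    by_cases h : k ∈ Km
    · simp [h, hKm h]
    · simp [h]; split <;> omega
  have hsub0 : (0 : Pt r) ≤ ℓ - eK Km := by
    intro k
    have := (hKmJ k).trans (hJm k)
    simp only [Pi.sub_apply, Pi.zero_apply]; omega
  have hv0 : (0 : Pt r) ≤ ℓ + eK Kp - eK Km := by
    intro k
    have h1 := hsub0 k
    simp only [Pi.sub_apply, Pi.add_apply, Pi.zero_apply, eK_apply] at h1 ⊢
    split <;> omega
  have h1 : w (ℓ + eK Kp - eK Km) ≤ w ((ℓ + eK Kp - eK Km) + eK Km) + Km.card :=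
    lip_down G w hw Km _ hv0
  have he1 : (ℓ + eK Kp - eK Km) + eK Km = ℓ + eK Kp := by ring
  rw [he1, exact_up Kp hKp] at h1
  have h2 : w ((ℓ - eK Km) + eK Kp) ≤ w (ℓ - eK Km) + Kp.card :=
    lip_up G w hw Kp _ hsub0
  have he2 : (ℓ - eK Km) + eK Kp = ℓ + eK Kp - eK Km := by ring
  rw [he2, exact_down Km hKm] at h2
  omega
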